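/- (Appendix D, generic determinant with cyclic zero pattern.) Fix integers 2 ≤ N_r ≤ N. For n ∈ ZMod N let \bar Z_n = {n−1, n−2, …, n−(N_r−1)} ⊆ ZMod N (the N_r − 1 residues cyclically preceding n). Let A ⊆ ZMod N with |A| = N_r and fix a ∈ A. Consider the (N_r − 1) × (N_r − 1) matrix M, with rows indexed by A \ {a} and columns indexed by \bar Z_a, over the multivariate polynomial ring over an integral domain in the indeterminates x_{m,c} (m, c ∈ ZMod N), defined by M m c = 0 if c ∈ \bar Z_m and M m c = x_{m,c} otherwise. Then the determinant of M is a nonzero polynomial. -/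

import Mathlib

/-- Appendix D, generic determinant with cyclic zero pattern: for
`2 ≤ N_r ≤ N`, `\bar Z_n = {n−1, …, n−(N_r−1)} ⊆ ZMod N`, `A ⊆ ZMod N` with `|A| = N_r`
and `a ∈ A`, the `(N_r−1) × (N_r−1)` matrix `M` over the multivariate polynomial ring
(rows indexed by `A \ {a}`, columns by `\bar Z_a`) with `M m c = 0` if `c ∈ \bar Z_m` and
`M m c = x_{m,c}` otherwise, has nonzero determinant (for any identification of the row and
column index types). -/
theorem stmt_9 {R : Type} [CommRing R] [IsDomain R]
    (N Nr : ℕ) [NeZero N] (h2 : 2 ≤ Nr) (hNrN : Nr ≤ N)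
    (A : Finset (ZMod N)) (hA : A.card = Nr) (a : ZMod N) (ha : a ∈ A) :
    let Zbar : ZMod N → Finset (ZMod N) := fun n =>
      (Finset.range (Nr - 1)).image fun j : ℕ => n - ((j + 1 : ℕ) : ZMod N)
    let M : Matrix {m : ZMod N // m ∈ A.erase a} {c : ZMod N // c ∈ Zbar a}
        (MvPolynomial (ZMod N × ZMod N) R) :=
      fun m c => if (c : ZMod N) ∈ Zbar (m : ZMod N) then 0
        else MvPolynomial.X ((m : ZMod N), (c : ZMod N))
    ∀ e : {c : ZMod N // c ∈ Zbar a} ≃ {m : ZMod N // m ∈ A.erase a},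
      (M.submatrix e id).det ≠ 0 := by
  intro Zbar M e
  have hN : 0 < N := NeZero.pos N
  set d : ZMod N → ℕ := fun m => (m - a).val with hd
  have hdval : ∀ m : ZMod N, ((d m : ℕ) : ZMod N) = m - a := by
    intro m; simp [hd, ZMod.natCast_val, ZMod.cast_id]
  have hdinj : Function.Injective d := by
    intro m1 m2 h
    have : m1 - a = m2 - a := by rw [← hdval m1, ← hdval m2, h]
    simpa using this
  have hdlt : ∀ m, d m < N := fun m => ZMod.val_lt _
  have hdpos : ∀ m ∈ A.erase a, 1 ≤ d m := by
    intro m hm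
    rcases Finset.mem_erase.1 hm with ⟨hne, _⟩
    have : m - a ≠ 0 := sub_ne_zero.2 hne
    have : d m ≠ 0 := by simpa [hd, ZMod.val_eq_zero] using this
    omega
  set r : ZMod N → ℕ :=
    fun m => ((A.erase a).filter (fun m' => d m' ≤ d m)).card with hr
  have hr1 : ∀ m ∈ A.erase a, 1 ≤ r m := by
    intro m hm
    have : m ∈ (A.erase a).filter (fun m' => d m' ≤ d m) := by
      simp [Finset.mem_filter, hm]
    exact Finset.card_pos.2 ⟨m, this⟩
  have hrle : ∀ m, r m ≤ Nr - 1 := by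
    intro m
    have h1 : ((A.erase a).filter (fun m' => d m' ≤ d m)).card ≤ (A.erase a).card :=
      Finset.card_le_card (Finset.filter_subset _ _)
    rwa [Finset.card_erase_of_mem ha, hA] at h1
  have hrd : ∀ m, r m ≤ d m := by
    intro m
    have h1 : ((A.erase a).filter (fun m' => d m' ≤ d m)).card ≤ (Finset.Icc 1 (d m)).card := by
      apply Finset.card_le_card_of_injOn d
      · intro m' hm'
        rcases Finset.mem_filter.1 hm' with ⟨hm'e, hle⟩
        exact Finset.mem_Icc.2 ⟨hdpos m' hm'e, hle⟩
      · exact fun x _ y _ h => hdinj h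
    simpa [Nat.card_Icc] using h1
  have hdub : ∀ m ∈ A.erase a, d m ≤ N - Nr + r m := by
    intro m hm
    have hsplit : r m + ((A.erase a).filter (fun m' => ¬ d m' ≤ d m)).card
        = (A.erase a).card := by
      simpa using Finset.card_filter_add_card_filter_not
        (s := A.erase a) (p := fun m' => d m' ≤ d m)
    rw [Finset.card_erase_of_mem ha, hA] at hsplit
    have h1 : ((A.erase a).filter (fun m' => ¬ d m' ≤ d m)).card
        ≤ (Finset.Icc (d m + 1) (N - 1)).card := by
      apply Finset.card_le_card_of_injOn d
      · intro m' hm'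
        rcases Finset.mem_filter.1 hm' with ⟨hm'e, hle⟩
        have := hdlt m'
        exact Finset.mem_Icc.2 ⟨by omega, by omega⟩
      · exact fun x _ y _ h => hdinj h
    rw [Nat.card_Icc] at h1
    have := hr1 m hm
    have := hrle m
    have := hdlt m
    omega
  have hrmono : ∀ m1 ∈ A.erase a, ∀ m2 ∈ A.erase a, d m1 < d m2 → r m1 < r m2 := by
    intro m1 hm1 m2 hm2 hlt
    apply Finset.card_lt_card
    constructor
    · intro x hx
      rcases Finset.mem_filter.1 hx with ⟨hxe, hle⟩
      exact Finset.mem_filter.2 ⟨hxe, by omega⟩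
    · intro hsub
      have : m2 ∈ (A.erase a).filter (fun m' => d m' ≤ d m1) :=
        hsub (Finset.mem_filter.2 ⟨hm2, le_refl _⟩)
      rcases Finset.mem_filter.1 this with ⟨_, hle⟩
      omega
  have hrinj : ∀ m1 ∈ A.erase a, ∀ m2 ∈ A.erase a, r m1 = r m2 → m1 = m2 := by
    intro m1 hm1 m2 hm2 heq
    rcases lt_trichotomy (d m1) (d m2) with h | h | h
    · exact absurd heq (by have := hrmono m1 hm1 m2 hm2 h; omega)
    · exact hdinj h
    · exact absurd heq (by have := hrmono m2 hm2 m1 hm1 h; omega)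
  set g : ZMod N → ZMod N := fun m => a - ((Nr - r m : ℕ) : ZMod N) with hg
  have hmemZ : ∀ m ∈ A.erase a, g m ∈ Zbar a := by
    intro m hm
    have h1 := hr1 m hm
    have h2' := hrle m
    simp only [Zbar, Finset.mem_image]
    refine ⟨Nr - r m - 1, Finset.mem_range.2 (by omega), ?_⟩
    congr 2
    omega
  have hkey : ∀ m ∈ A.erase a, g m ∉ Zbar m := by
    intro m hm hcontra
    simp only [Zbar, Finset.mem_image] at hcontra
    rcases hcontra with ⟨k, hk, heq⟩
    rw [Finset.mem_range] at hk
    simp only [hg] at heq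
    have h3 : ((d m + (Nr - r m) : ℕ) : ZMod N) = ((k + 1 : ℕ) : ZMod N) := by
      push_cast [hdval]
      push_cast at heq
      linear_combination heq
    have hrd' := hrd m
    have hdu := hdub m hm
    have h1 := hr1 m hm
    have h2' := hrle m
    have htNr : Nr ≤ d m + (Nr - r m) := by omega
    have htN : d m + (Nr - r m) ≤ N := by omega
    rcases eq_or_lt_of_le htN with hEq | hLt
    · rw [hEq] at h3
      have : ((k + 1 : ℕ) : ZMod N) = 0 := by simpa using h3.symm
      have hv : ((k + 1 : ℕ) : ZMod N).val = k + 1 := ZMod.val_cast_of_lt (by omega)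
      rw [this] at hv
      simp [ZMod.val_zero] at hv
    · have hv1 : ((d m + (Nr - r m) : ℕ) : ZMod N).val = d m + (Nr - r m) := ZMod.val_cast_of_lt hLt
      have hv2 : ((k + 1 : ℕ) : ZMod N).val = k + 1 := ZMod.val_cast_of_lt (by omega)
      rw [h3, hv2] at hv1
      omega
  have hginj : ∀ m1 ∈ A.erase a, ∀ m2 ∈ A.erase a, g m1 = g m2 → m1 = m2 := by
    intro m1 hm1 m2 hm2 heq
    have h1 : ((Nr - r m1 : ℕ) : ZMod N) = ((Nr - r m2 : ℕ) : ZMod N) :=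
      sub_right_injective heq
    have hb1 := hr1 m1 hm1; have hb1' := hrle m1
    have hb2 := hr1 m2 hm2; have hb2' := hrle m2
    have hv1 : ((Nr - r m1 : ℕ) : ZMod N).val = Nr - r m1 :=
      ZMod.val_cast_of_lt (by omega)
    have hv2 : ((Nr - r m2 : ℕ) : ZMod N).val = Nr - r m2 :=
      ZMod.val_cast_of_lt (by omega)
    rw [h1, hv2] at hv1
    exact hrinj m1 hm1 m2 hm2 (by omega)
  -- cardinalities
  have hcard1 : Fintype.card {m : ZMod N // m ∈ A.erase a} = Nr - 1 := by
    rw [Fintype.card_coe, Finset.card_erase_of_mem ha, hA]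
  have hcard2 : Fintype.card {c : ZMod N // c ∈ Zbar a} = Nr - 1 := by
    rw [Fintype.card_coe]
    have : (Zbar a).card = Nr - 1 := by
      rw [show Zbar a = (Finset.range (Nr - 1)).image
          (fun j : ℕ => a - ((j + 1 : ℕ) : ZMod N)) from rfl]
      rw [Finset.card_image_of_injOn, Finset.card_range]
      intro j1 hj1 j2 hj2 hjeq
      rw [Finset.mem_coe, Finset.mem_range] at hj1 hj2
      have h1 : ((j1 + 1 : ℕ) : ZMod N) = ((j2 + 1 : ℕ) : ZMod N) :=
        sub_right_injective hjeq
      have hv1 : ((j1 + 1 : ℕ) : ZMod N).val = j1 + 1 := ZMod.val_cast_of_lt (by omega)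
      have hv2 : ((j2 + 1 : ℕ) : ZMod N).val = j2 + 1 := ZMod.val_cast_of_lt (by omega)
      rw [h1, hv2] at hv1
      omega
    exact this
  -- the matching as an equivalence
  set f : {m : ZMod N // m ∈ A.erase a} → {c : ZMod N // c ∈ Zbar a} :=
    fun m => ⟨g m, hmemZ m m.2⟩ with hf
  have hfinj : Function.Injective f := by
    intro m1 m2 h
    exact Subtype.ext (hginj m1 m1.2 m2 m2.2 (by simpa [hf, Subtype.ext_iff] using h))
  have hfbij : Function.Bijective f :=
    (Fintype.bijective_iff_injective_and_card f).2 ⟨hfinj, hcard1.trans hcard2.symm⟩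
  set f' := Equiv.ofBijective f hfbij with hf'
  set σ := e.trans f' with hσ
  -- evaluation
  set v : ZMod N × ZMod N → R := fun p => if g p.1 = p.2 then 1 else 0 with hv
  set φ := MvPolynomial.eval v with hφ
  intro hdet0
  have hmap : (M.submatrix e id).map φ = (Equiv.toPEquiv σ).toMatrix := by
    ext c c'
    have hσc : ((σ c : {c : ZMod N // c ∈ Zbar a}) : ZMod N) = g ((e c : _) : ZMod N) := rfl
    rw [PEquiv.toMatrix_apply, Equiv.toPEquiv_apply]
    simp only [Option.mem_some_iff]
    by_cases hz : ((c' : _) : ZMod N) ∈ Zbar (((e c : _) : _) : ZMod N)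
    · have hne : c' ≠ σ c := by
        intro hcc
        apply hkey _ (e c).2
        rw [← hσc, ← hcc]
        exact hz
      have hne' : ¬ σ c = c' := fun h => hne h.symm
      simp [Matrix.map_apply, Matrix.submatrix_apply, Matrix.submatrix, Matrix.of_apply, M, hz, hne, hne']
    · have : (c' = σ c) ↔ (g (((e c : _) : _) : ZMod N) = ((c' : _) : ZMod N)) := by
        rw [Subtype.ext_iff, hσc, eq_comm]
      simp only [Matrix.map_apply, Matrix.submatrix_apply, Matrix.submatrix, Matrix.of_apply, id_eq, M, hz, if_false,
        hφ, MvPolynomial.eval_X, hv]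
      by_cases hcc : c' = σ c
      · simp [hcc, this.1 hcc]
      · have hng : ¬ g (((e c : _) : _) : ZMod N) = ((c' : _) : ZMod N) :=
          fun h => hcc (this.2 h)
        have hcc' : ¬ σ c = c' := fun h => hcc h.symm
        simp [hng, hcc']
  have hdet := congrArg φ hdet0
  rw [map_zero, RingHom.map_det, RingHom.mapMatrix_apply, hmap, Matrix.det_permutation] at hdet
  rcases Int.units_eq_one_or (Equiv.Perm.sign σ) with h | h <;> rw [h] at hdet <;>
    norm_num at hdet
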